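/- Let h > 0 and let λ₂ be a nonzero real number. Set ψ = 1, φ = h and θ = (e^{λ₂h} − λ₂h − 1)/(λ₂h(e^{λ₂h} − 1)). Then: ψ + φλ₂(1 − θ) = e^{λ₂h}(1 − φλ₂θ); ψ = 1 (so the condition for the zero eigenvalue, ψ + φ·0·(1−θ) = e^{0}(1 − φ·0·θ), holds); and φ(1 − θ + ψθ) = he^{0·h}(1 − φ·0·θ)², i.e. φ(1 − θ + ψθ) = h. -/

import Mathlib

/-- For eigenvalues `0, 0, λ₂` (Jordan case `J₃` with `λ₁ = 0`), the
parameters (p1) satisfy the three exactness conditions. -/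
theorem implicit_params_jordan_J3_zero_case
    (h l2 : ℝ) (hh : 0 < h) (hl2 : l2 ≠ 0)
    (ψ φ θ : ℝ) (hψ : ψ = 1) (hφ : φ = h)
    (hθ : θ = (Real.exp (l2 * h) - l2 * h - 1) / (l2 * h * (Real.exp (l2 * h) - 1))) :
    ψ + φ * l2 * (1 - θ) = Real.exp (l2 * h) * (1 - φ * l2 * θ) ∧
    ψ + φ * 0 * (1 - θ) = Real.exp 0 * (1 - φ * 0 * θ) ∧
    φ * (1 - θ + ψ * θ) = h * Real.exp (0 * h) * (1 - φ * 0 * θ) ^ 2 ∧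
    φ * (1 - θ + ψ * θ) = h := by
  have hlh : l2 * h ≠ 0 := mul_ne_zero hl2 hh.ne'
  have he : Real.exp (l2 * h) - 1 ≠ 0 := by
    intro hc
    exact hlh (by simpa [sub_eq_zero, Real.exp_eq_one_iff] using hc)
  subst hψ hφ hθ
  refine ⟨?_, by simp, by simp, by ring⟩
  rw [mul_comm l2 φ] at he
  field_simp
  ring
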